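/- Let a = {aₙ} be a non-increasing, summable sequence of positive real numbers with tails rₙ^{(a)} and associated dimension function h_a, and suppose that the inverse function h_a⁻¹ is NOT doubling. Define the sequence b by b₁ = a₁ and b_{2k} = b_{2k+1} = a_k/2 for k ≥ 1. Then b is a non-increasing, summable positive sequence that is weak tail-equivalent to a (indeed r_{2n}^{(b)} = rₙ^{(a)} for all n) but not tail-equivalent to a: the ratios rₙ^{(b)}/rₙ^{(a)} are unbounded. Consequently, if every sequence weak tail-equivalent to a is tail-equivalent to a, then h_a⁻¹ is doubling. -/

import Mathlib

open Set Filter Metric MeasureTheory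
open scoped ENNReal NNReal Topology

noncomputable section

/-- The `h`-Hausdorff measure of `E ⊆ ℝ`:
`H^h(E) = lim_{δ→0⁺} inf {Σᵢ h(|Eᵢ|) : E ⊆ ⋃ᵢ Eᵢ, |Eᵢ| ≤ δ}`.
Since the inner infimum is antitone in `δ`, the limit as `δ → 0⁺` is the
supremum over `0 < δ ≤ A` (the parameter `A` records the domain `(0,A]` of the
dimension function `h`; by monotonicity the value of the limit is unchanged). -/
def Hh (A : ℝ) (h : ℝ → ℝ≥0∞) (E : Set ℝ) : ℝ≥0∞ :=
  ⨆ (δ : ℝ) (_ : 0 < δ) (_ : δ ≤ A),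
    ⨅ (t : ℕ → Set ℝ) (_ : E ⊆ ⋃ n, t n) (_ : ∀ n, Metric.diam (t n) ≤ δ),
      ∑' n, h (Metric.diam (t n))

/-- A `δ`-packing of `E`: a countable disjoint family of open balls centered at
points of `E` with diameters less than `δ`, recorded as a set of
(center, radius) pairs. -/
def IsPacking (E : Set ℝ) (δ : ℝ) (P : Set (ℝ × ℝ)) : Prop :=
  P.Countable ∧ (∀ p ∈ P, p.1 ∈ E ∧ 0 < p.2 ∧ 2 * p.2 < δ) ∧
    P.PairwiseDisjoint fun p => Metric.ball p.1 p.2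

/-- The `h`-packing pre-measure of `E ⊆ ℝ`:
`P₀^h(E) = lim_{δ→0⁺} sup {Σᵢ h(|Bᵢ|) : {Bᵢ} is a δ-packing of E}`.
The inner supremum is monotone in `δ`, so the limit as `δ → 0⁺` is the infimum
over `0 < δ ≤ A`. -/
def P0h (A : ℝ) (h : ℝ → ℝ≥0∞) (E : Set ℝ) : ℝ≥0∞ :=
  ⨅ (δ : ℝ) (_ : 0 < δ) (_ : δ ≤ A),
    ⨆ (P : Set (ℝ × ℝ)) (_ : IsPacking E δ P), ∑' p : P, h (2 * (p : ℝ × ℝ).2)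

/-- The `h`-packing measure: `P^h(E) = inf {Σᵢ P₀^h(Eᵢ) : E = ⋃ᵢ Eᵢ}`. -/
def Ph (A : ℝ) (h : ℝ → ℝ≥0∞) (E : Set ℝ) : ℝ≥0∞ :=
  ⨅ (t : ℕ → Set ℝ) (_ : E = ⋃ n, t n), ∑' n, P0h A h (t n)

/-- `h` is a dimension function with domain `(0, A]`: continuous, increasing,
doubling, positive, with `h(x) → 0` as `x → 0⁺`.  We record partial functions
`(0,A] → (0,∞]` as functions `ℝ → ℝ≥0∞` extended by `0` on nonpositive
arguments (the continuous extension at `0`). -/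
structure IsDimFun (A : ℝ) (h : ℝ → ℝ≥0∞) : Prop where
  posA : 0 < A
  zero_of_nonpos : ∀ x : ℝ, x ≤ 0 → h x = 0
  pos : ∀ x ∈ Set.Ioc (0 : ℝ) A, 0 < h x
  continuousOn : ContinuousOn h (Set.Ioc 0 A)
  strictMonoOn : StrictMonoOn h (Set.Ioc 0 A)
  doubling : ∃ τ : ℝ≥0∞, 0 < τ ∧ τ ≠ ∞ ∧ ∀ x : ℝ, 0 < x → 2 * x ≤ A → τ * h (2 * x) ≤ h x
  tendsto_zero : Tendsto h (nhdsWithin 0 (Set.Ioi 0)) (nhds 0)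

/-- `f ≼ h` on `(0, A]`: there is a (finite, positive) constant `c` with
`f(x) ≤ c·h(x)` for all `x ∈ (0,A]`. -/
def FLeq (A : ℝ) (f h : ℝ → ℝ≥0∞) : Prop :=
  ∃ c : ℝ≥0∞, 0 < c ∧ c ≠ ∞ ∧ ∀ x ∈ Set.Ioc (0 : ℝ) A, f x ≤ c * h x

/-- `f ≡ h` on `(0, A]`: `f ≼ h` and `h ≼ f`. -/
def FEquiv (A : ℝ) (f h : ℝ → ℝ≥0∞) : Prop := FLeq A f h ∧ FLeq A h f

/-- Tail of a series: `rTail a n = Σ_{j ≥ n} a j` (0-based indexing, so the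
paper's `r_n`, `n ≥ 1`, is `rTail a (n-1)`). -/
def rTail (a : ℕ → ℝ) (n : ℕ) : ℝ := ∑' k : ℕ, a (n + k)

/-- In the Cantor construction for the gap sequence `a`, the gaps are indexed
by the nodes `m ≥ 1` of the infinite binary tree in heap order (node `m` has
children `2m, 2m+1`), the gap at node `m` having length `a (m-1)`.  `nodeLen a m`
is the sum of the lengths of all gaps in the subtree rooted at `m`, i.e. the
length of the step interval corresponding to node `m`. -/
def nodeLen (a : ℕ → ℝ) (m : ℕ) : ℝ :=
  ∑' k : ℕ, ∑ i ∈ Finset.range (2 ^ k), a (m * 2 ^ k + i - 1)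

/-- Left endpoint of the `j`-th (0 ≤ j < 2^k, left to right) step-`k` interval
in the Cantor construction for the gap sequence `a` (realized in `[0, Σ a]`):
a left child keeps its parent's left endpoint; a right child's interval starts
after its left sibling's interval followed by the parent's gap. -/
def leftEnd (a : ℕ → ℝ) : ℕ → ℕ → ℝ
  | 0, _ => 0
  | (k + 1), j =>
    if j % 2 = 0 then leftEnd a k (j / 2)
    else leftEnd a k (j / 2) + nodeLen a (2 ^ (k + 1) + j - 1) + a (2 ^ k + j / 2 - 1)

/-- The Cantor set `C_a` associated with a (positive, non-increasing, summable)
sequence `a`, realized inside the interval `[0, Σ a]`: the intersection over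
`k` of the unions of the `2^k` step-`k` intervals. -/
def cantorSetOf (a : ℕ → ℝ) : Set ℝ :=
  ⋂ k : ℕ, ⋃ j ∈ Finset.range (2 ^ k),
    Set.Icc (leftEnd a k j) (leftEnd a k j + nodeLen a (2 ^ k + j))

/-- `h` (increasing and continuous on `(0, A]`) is associated to the sequence
`a`: the sequence `{h(r_n/n)}` is equivalent to `{1/n}`, i.e. there are
constants `0 < c₁, c₂ < ∞` with `c₁ ≤ n · h(r_n/n) ≤ c₂` for all `n ≥ 1`
(0-based: `n ≥ 1` corresponds to `n+1` below). -/
def IsAssociated (A : ℝ) (h : ℝ → ℝ≥0∞) (a : ℕ → ℝ) : Prop :=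
  ContinuousOn h (Set.Ioc 0 A) ∧ StrictMonoOn h (Set.Ioc 0 A) ∧
  ∃ c₁ c₂ : ℝ≥0∞, 0 < c₁ ∧ c₂ ≠ ∞ ∧ ∀ n : ℕ,
    c₁ ≤ ((n : ℝ≥0∞) + 1) * h (rTail a n / ((n : ℝ) + 1)) ∧
    ((n : ℝ≥0∞) + 1) * h (rTail a n / ((n : ℝ) + 1)) ≤ c₂

/-- Weak tail-equivalence: there are positive integers `j, k` with
`r_n^{(a)} ≥ r_{jn}^{(b)}/j` and `r_n^{(b)} ≥ r_{kn}^{(a)}/k` for all `n ≥ 1`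
(0-based shift: paper's `r_n` is `rTail · (n-1)`). -/
def WeakTailEquiv (a b : ℕ → ℝ) : Prop :=
  ∃ j k : ℕ, 0 < j ∧ 0 < k ∧
    (∀ n : ℕ, rTail b (j * (n + 1) - 1) / (j : ℝ) ≤ rTail a n) ∧
    (∀ n : ℕ, rTail a (k * (n + 1) - 1) / (k : ℝ) ≤ rTail b n)

/-- Tail-equivalence: the sequences of tails are equivalent, i.e. the ratios
`r_n^{(a)}/r_n^{(b)}` are bounded above and below by positive constants. -/
def TailEquiv (a b : ℕ → ℝ) : Prop :=
  ∃ c₁ c₂ : ℝ, 0 < c₁ ∧ ∀ n : ℕ,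
    c₁ ≤ rTail a n / rTail b n ∧ rTail a n / rTail b n ≤ c₂

/-- The Hausdorff dimension of `E`, computed from the `h_s`-Hausdorff measures,
`h_s(x) = x^s`:  `dim_H E = sup {s > 0 : H^{h_s}(E) = ∞}`. -/
def hausdDim (A : ℝ) (E : Set ℝ) : ℝ≥0∞ :=
  ⨆ (s : ℝ) (_ : 0 < s) (_ : Hh A (fun x => ENNReal.ofReal (x ^ s)) E = ∞),
    ENNReal.ofReal s

/-- The packing dimension of `E`: `dim_P E = sup {s > 0 : P^{h_s}(E) = ∞}`. -/
def packDim (A : ℝ) (E : Set ℝ) : ℝ≥0∞ :=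
  ⨆ (s : ℝ) (_ : 0 < s) (_ : Ph A (fun x => ENNReal.ofReal (x ^ s)) E = ∞),
    ENNReal.ofReal s

/-- The pre-packing dimension of `E`: `dim_{P₀} E = sup {s > 0 : P₀^{h_s}(E) = ∞}`. -/
def prePackDim (A : ℝ) (E : Set ℝ) : ℝ≥0∞ :=
  ⨆ (s : ℝ) (_ : 0 < s) (_ : P0h A (fun x => ENNReal.ofReal (x ^ s)) E = ∞),
    ENNReal.ofReal s

/-- `f ≼ h` on the set `S`, for real-valued functions. -/
def RLeqOn (S : Set ℝ) (f h : ℝ → ℝ) : Prop :=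
  ∃ c : ℝ, 0 < c ∧ ∀ x ∈ S, f x ≤ c * h x

/-- `f ≡ h` on the set `S`, for real-valued functions. -/
def REquivOn (S : Set ℝ) (f h : ℝ → ℝ) : Prop := RLeqOn S f h ∧ RLeqOn S h f

/-- Real-valued version of `IsAssociated`: `h : (0,A] → (0,∞)` is increasing,
continuous, positive and `{h(r_n/n)} ≡ {1/n}`. -/
def IsAssociatedR (A : ℝ) (h : ℝ → ℝ) (a : ℕ → ℝ) : Prop :=
  ContinuousOn h (Set.Ioc 0 A) ∧ StrictMonoOn h (Set.Ioc 0 A) ∧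
  (∀ x ∈ Set.Ioc (0 : ℝ) A, 0 < h x) ∧
  ∃ c₁ c₂ : ℝ, 0 < c₁ ∧ ∀ n : ℕ,
    c₁ ≤ ((n : ℝ) + 1) * h (rTail a n / ((n : ℝ) + 1)) ∧
    ((n : ℝ) + 1) * h (rTail a n / ((n : ℝ) + 1)) ≤ c₂

end

section AuxTail
variable {a : ℕ → ℝ}

lemma summable_tail (asum : Summable a) (n : ℕ) : Summable (fun k => a (n + k)) :=
  asum.comp_injective (add_right_injective n)

lemma rTail_pos' (apos : ∀ n, 0 < a n) (asum : Summable a) (n : ℕ) : 0 < rTail a n :=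
  Summable.tsum_pos (summable_tail asum n) (fun _ => (apos _).le) 0 (apos _)

lemma rTail_succ' (asum : Summable a) (n : ℕ) : rTail a n = a n + rTail a (n + 1) := by
  have h := Summable.tsum_eq_zero_add (summable_tail asum n)
  simp only [Nat.add_zero] at h
  rw [rTail, h, rTail]
  congr 1
  exact tsum_congr fun k => by rw [show n + (k + 1) = n + 1 + k by omega]

lemma rTail_anti' (apos : ∀ n, 0 < a n) (asum : Summable a) {n m : ℕ} (h : n ≤ m) :
    rTail a m ≤ rTail a n := by
  have step : ∀ k, rTail a (k + 1) ≤ rTail a k := fun k => by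
    rw [rTail_succ' asum k]; linarith [apos k]
  induction m with
  | zero => rw [Nat.le_zero.mp h]
  | succ m ih =>
    rcases Nat.lt_or_ge n (m+1) with h' | h'
    · exact (step m).trans (ih (by omega))
    · rw [le_antisymm h h']

lemma rTail_iter' (apos : ∀ n, 0 < a n) (asum : Summable a) {K : ℝ} (hK1 : 1 ≤ K)
    (hK : ∀ n, rTail a n ≤ K * rTail a (2*n+1)) (t n : ℕ) :
    rTail a n ≤ K^t * rTail a (2^t * (n+1) - 1) := by
  induction t with
  | zero => simp [show 2^0*(n+1)-1 = n by omega]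
  | succ t ih =>
    have h2 := hK (2^t*(n+1)-1)
    have hMpos : 0 < 2^t*(n+1) := by positivity
    have h2M : 2^(t+1)*(n+1) = 2*(2^t*(n+1)) := by ring
    have hidx : 2*(2^t*(n+1)-1)+1 = 2^(t+1)*(n+1)-1 := by omega
    calc rTail a n ≤ K^t * rTail a (2^t*(n+1)-1) := ih
    _ ≤ K^t * (K * rTail a (2*(2^t*(n+1)-1)+1)) :=
        mul_le_mul_of_nonneg_left h2 (by positivity)
    _ = K^(t+1) * rTail a (2*(2^t*(n+1)-1)+1) := by ring
    _ = K^(t+1) * rTail a (2^(t+1)*(n+1)-1) := by rw [hidx]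

end AuxTail

lemma doubling_of_ratio_bounded (A : ℝ) (hA : 0 < A) (a : ℕ → ℝ)
    (apos : ∀ n, 0 < a n) (asum : Summable a) (hra : rTail a 0 ≤ A)
    (ha ha' : ℝ → ℝ) (haa : IsAssociatedR A ha a)
    (hinv : ∀ x ∈ Set.Ioc (0 : ℝ) A, ha' (ha x) = x)
    {K : ℝ} (hK1 : 1 ≤ K) (hK : ∀ n, rTail a n ≤ K * rTail a (2*n+1)) :
    ∃ τ : ℝ, 0 < τ ∧ ∀ y : ℝ, y ∈ ha '' Set.Ioc (0 : ℝ) A →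
      2 * y ∈ ha '' Set.Ioc (0 : ℝ) A → τ * ha' (2 * y) ≤ ha' y := by
  classical
  obtain ⟨hcont, hmono, hpos, c₁, C, hc₁, hassoc⟩ := haa
  have hC : 0 < C := lt_of_lt_of_le hc₁ (le_trans (hassoc 0).1 (hassoc 0).2)
  -- the sequence x n = rTail a n / (n+1)
  set x : ℕ → ℝ := fun n => rTail a n / ((n:ℝ)+1) with hxdef
  have hxn : ∀ n : ℕ, x n = rTail a n / ((n:ℝ)+1) := fun n => rfl
  have hrpos : ∀ n : ℕ, 0 < rTail a n := rTail_pos' apos asum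
  have hx_pos : ∀ n, 0 < x n := fun n => by rw [hxn]; exact div_pos (hrpos n) (by positivity)
  have hx_mem : ∀ n, x n ∈ Set.Ioc (0:ℝ) A := fun n => ⟨hx_pos n, by
    rw [hxn]
    have h1 : rTail a n ≤ rTail a 0 := rTail_anti' apos asum (Nat.zero_le n)
    have h2 : rTail a n / ((n:ℝ)+1) ≤ rTail a n :=
      div_le_self (hrpos n).le (le_add_of_nonneg_left (Nat.cast_nonneg n))
    linarith⟩
  have hx_anti : ∀ {n m : ℕ}, n ≤ m → x m ≤ x n := by
    intro n m h
    rw [hxn, hxn]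
    apply div_le_div₀ (hrpos n).le (rTail_anti' apos asum h) (by positivity)
    have : (n:ℝ) ≤ (m:ℝ) := Nat.cast_le.mpr h
    linarith
  have hlow : ∀ n : ℕ, c₁/((n:ℝ)+1) ≤ ha (x n) := fun n => by
    have h := (hassoc n).1
    rw [div_le_iff₀ (by positivity)]
    calc c₁ ≤ ((n:ℝ)+1) * ha (rTail a n/((n:ℝ)+1)) := h
    _ = ha (x n) * ((n:ℝ)+1) := by rw [hxn]; ring
  have hup : ∀ n : ℕ, ha (x n) ≤ C/((n:ℝ)+1) := fun n => by
    have h := (hassoc n).2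
    rw [le_div_iff₀ (by positivity)]
    calc ha (x n) * ((n:ℝ)+1) = ((n:ℝ)+1) * ha (rTail a n/((n:ℝ)+1)) := by rw [hxn]; ring
    _ ≤ C := h
  -- constants
  set N₀ : ℕ := ⌈(4*C/c₁ : ℝ)⌉₊ + 1 with hN₀def
  have hN₀ : 4*C/c₁ ≤ (N₀:ℝ) := by
    rw [hN₀def]; push_cast; linarith [Nat.le_ceil (4*C/c₁)]
  obtain ⟨t₀, ht₀⟩ := pow_unbounded_of_one_lt (8*C/c₁) (one_lt_two (α := ℝ))
  have hKt : (0:ℝ) < K^t₀ := pow_pos (by linarith) t₀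
  have h8pos : (0:ℝ) < 8*C*K^t₀ := by
    have : (0:ℝ) < 8*C := by linarith
    exact mul_pos this hKt
  refine ⟨min (x N₀ / A) (c₁ / (8*C*K^t₀)), lt_min (div_pos (hx_pos N₀) hA) (div_pos hc₁ h8pos), ?_⟩
  rintro y ⟨u, hu, rfl⟩ ⟨v, hv, hvy⟩
  rw [← hvy, hinv v hv, hinv u hu]
  have hau : 0 < ha u := hpos u hu
  have hv0 : 0 < v := hv.1
  by_cases hcase : x N₀ ≤ u
  · calc min (x N₀ / A) (c₁ / (8*C*K^t₀)) * v ≤ (x N₀ / A) * A :=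
        mul_le_mul (min_le_left _ _) hv.2 hv0.le (div_pos (hx_pos N₀) hA).le
    _ = x N₀ := div_mul_cancel₀ _ hA.ne'
    _ ≤ u := hcase
  · push_neg at hcase
    have hau_lt : ha u < ha (x N₀) := hmono hu (hx_mem N₀) hcase
    have hex : ∃ n : ℕ, ha (x n) ≤ ha u := by
      obtain ⟨t, ht⟩ := exists_nat_gt (C / ha u)
      have h1 : C < (t:ℝ) * ha u := (div_lt_iff₀ hau).1 ht
      refine ⟨t, le_trans (hup t) ?_⟩
      rw [div_le_iff₀ (by positivity)]
      nlinarith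
    set n := Nat.find hex with hndef
    have hn : ha (x n) ≤ ha u := Nat.find_spec hex
    have hmin : ∀ m, m < n → ha u < ha (x m) := fun m hm =>
      lt_of_not_ge (Nat.find_min hex hm)
    have hnN : N₀ < n := by
      by_contra h
      push_neg at h
      have := hmono.monotoneOn (hx_mem N₀) (hx_mem n) (hx_anti h)
      linarith
    have hn1 : 1 ≤ n := by omega
    have hnpos : (0:ℝ) < (n:ℝ) := by exact_mod_cast hn1
    have hnR : (4*C/c₁ : ℝ) < (n:ℝ) :=
      lt_of_le_of_lt hN₀ (by exact_mod_cast hnN)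
    have hupper : ha u < C / (n:ℝ) := by
      have h1 : ha u < ha (x (n-1)) := hmin (n-1) (by omega)
      have h2 : ha (x (n-1)) ≤ C / (((n-1:ℕ):ℝ)+1) := hup (n-1)
      have h3 : (((n-1:ℕ):ℝ)+1) = (n:ℝ) := by
        rw [Nat.cast_sub hn1]; push_cast; ring
      rw [h3] at h2; linarith
    have hxu : x n ≤ u := by
      by_contra h
      push_neg at h
      exact absurd (hmono hu (hx_mem n) h) (not_lt.2 hn)
    -- the index m
    have hquart : 4*C < c₁ * n := by
      rw [div_lt_iff₀ hc₁] at hnR; linarith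
    set F : ℕ := ⌊c₁ * (n:ℝ) / (2*C)⌋₊ with hFdef
    have hF2 : 2 ≤ F := by
      rw [hFdef]
      apply Nat.le_floor
      rw [le_div_iff₀ (by positivity)]
      push_cast; linarith
    have hFle : (F:ℝ) ≤ c₁ * n / (2*C) := Nat.floor_le (by positivity)
    have hFge : c₁ * n / (4*C) ≤ (F:ℝ) := by
      have h1 : c₁ * n / (2*C) < (F:ℝ) + 1 := Nat.lt_floor_add_one _
      have h2 : (2:ℝ) ≤ c₁*n/(2*C) := by rw [le_div_iff₀ (by positivity)]; linarith
      have h3 : c₁*n/(4*C) = (c₁*n/(2*C))/2 := by ring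
      rw [h3]; linarith
    set m : ℕ := F - 1 with hmdef
    have hmF : ((m:ℝ)+1) = (F:ℝ) := by
      have : m + 1 = F := by omega
      exact_mod_cast this
    have hFpos : (0:ℝ) < (F:ℝ) := by
      have : (2:ℝ) ≤ (F:ℝ) := by exact_mod_cast hF2
      linarith
    -- Step A : v ≤ x m
    have hxmv : ha v < ha (x m) := by
      have h2 : c₁ / ((m:ℝ)+1) ≤ ha (x m) := hlow m
      rw [hmF] at h2
      have h3 : 2*C/(n:ℝ) ≤ c₁ / (F:ℝ) := by
        rw [div_le_div_iff₀ hnpos hFpos]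
        rw [le_div_iff₀ (by positivity)] at hFle
        linarith
      have h4 : ha v < 2*C/(n:ℝ):= by
        rw [hvy, lt_div_iff₀ hnpos]
        rw [lt_div_iff₀ hnpos] at hupper
        linarith
      linarith
    have hvxm : v ≤ x m := by
      by_contra h
      push_neg at h
      exact absurd (hmono (hx_mem m) hv h) (not_lt.2 hxmv.le)
    -- Step B : rTail a m ≤ K^t₀ * rTail a n
    have hidx : n + 1 ≤ 2^t₀ * (m+1) := by
      have h1 : (8*C/c₁) * (F:ℝ) ≤ ((2:ℝ))^t₀ * ((m:ℝ)+1) := by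
        rw [hmF]
        exact mul_le_mul ht₀.le le_rfl hFpos.le (by positivity)
      have h2 : (n:ℝ)+1 ≤ (8*C/c₁) * (F:ℝ) := by
        have h3 : (8*C/c₁) * (c₁*(n:ℝ)/(4*C)) = 2*(n:ℝ) := by
          field_simp; ring
        have h4 : (8*C/c₁) * (c₁*(n:ℝ)/(4*C)) ≤ (8*C/c₁) * (F:ℝ) :=
          mul_le_mul_of_nonneg_left hFge (by positivity)
        have h6 : (1:ℝ) ≤ (n:ℝ) := by exact_mod_cast hn1
        rw [h3] at h4
        linarith
      have h5 : ((n:ℝ))+1 ≤ ((2^t₀*(m+1) : ℕ):ℝ) := by push_cast; linarith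
      exact_mod_cast h5
    have hrm : rTail a m ≤ K^t₀ * rTail a n := by
      calc rTail a m ≤ K^t₀ * rTail a (2^t₀*(m+1)-1) := rTail_iter' apos asum hK1 hK t₀ m
      _ ≤ K^t₀ * rTail a n :=
          mul_le_mul_of_nonneg_left (rTail_anti' apos asum (by omega)) (by positivity)
    -- Step C : combine
    have hρn : rTail a n ≤ u * ((n:ℝ)+1) := by
      have h := hxu
      rw [hxn, div_le_iff₀ (by positivity)] at h
      exact h
    have hu0 : 0 < u := hu.1
    have hfinal : v ≤ (8*C*K^t₀/c₁) * u := by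
      have h1 : v ≤ rTail a m / ((m:ℝ)+1) := by rw [← hxn]; exact hvxm
      rw [hmF, le_div_iff₀ hFpos] at h1
      have h6 : (1:ℝ) ≤ (n:ℝ) := by exact_mod_cast hn1
      have key : v * (c₁ * (n:ℝ) / (4*C)) ≤ K^t₀ * (u * (2*(n:ℝ))) := by
        calc v * (c₁ * (n:ℝ) / (4*C)) ≤ v * (F:ℝ) :=
            mul_le_mul_of_nonneg_left hFge hv0.le
        _ ≤ rTail a m := h1
        _ ≤ K^t₀ * rTail a n := hrm
        _ ≤ K^t₀ * (u * ((n:ℝ)+1)) := mul_le_mul_of_nonneg_left hρn hKt.le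
        _ ≤ K^t₀ * (u * (2*(n:ℝ))) := by
            apply mul_le_mul_of_nonneg_left _ hKt.le
            exact mul_le_mul_of_nonneg_left (by linarith) hu0.le
      have hden : (0:ℝ) < c₁ * (n:ℝ) / (4*C) := by positivity
      rw [← le_div_iff₀ hden] at key
      calc v ≤ K^t₀ * (u * (2*(n:ℝ))) / (c₁ * (n:ℝ) / (4*C)) := key
      _ = (8*C*K^t₀/c₁) * u := by field_simp; ring
    calc min (x N₀ / A) (c₁ / (8*C*K^t₀)) * v ≤ (c₁ / (8*C*K^t₀)) * ((8*C*K^t₀/c₁) * u) :=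
        mul_le_mul (min_le_right _ _) hfinal hv0.le (div_pos hc₁ h8pos).le
    _ = u := by field_simp

section BSeq
variable {a b : ℕ → ℝ}
  (hbdef : b = fun n => if n = 0 then a 0 else a ((n - 1) / 2) / 2)

include hbdef

lemma b_odd (k : ℕ) : b (2*k+1) = a k / 2 := by
  rw [hbdef]
  simp only
  rw [if_neg (by omega)]
  congr 2
  omega

lemma b_even (k : ℕ) : b (2*k+2) = a k / 2 := by
  rw [hbdef]
  simp only
  rw [if_neg (by omega)]
  congr 2
  omega

lemma summable_b (asum : Summable a) : Summable b := by
  have h1 : Summable (fun n => b (n + 1)) := by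
    apply Summable.even_add_odd
    · have : (fun k : ℕ => b (2*k+1)) = fun k => a k / 2 := funext fun k => b_odd hbdef k
      exact this ▸ asum.div_const 2
    · have : (fun k : ℕ => b (2*k+1+1)) = fun k => a k / 2 := funext fun k => by
        rw [show 2*k+1+1 = 2*k+2 by omega]; exact b_even hbdef k
      exact this ▸ asum.div_const 2
  exact (summable_nat_add_iff 1).1 h1

lemma rTail_b_eq (asum : Summable a) (n : ℕ) : rTail b (2*n+1) = rTail a n := by
  have hsb : Summable b := summable_b hbdef asum
  have hf : Summable (fun k => b (2*n+1+k)) := summable_tail hsb (2*n+1)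
  have hae : Summable (fun k : ℕ => a (n+k)/2) := (summable_tail asum n).div_const 2
  have he : (fun k : ℕ => b (2*n+1+2*k)) = fun k => a (n+k)/2 := funext fun k => by
    rw [show 2*n+1+2*k = 2*(n+k)+1 by ring]; exact b_odd hbdef (n+k)
  have ho : (fun k : ℕ => b (2*n+1+(2*k+1))) = fun k => a (n+k)/2 := funext fun k => by
    rw [show 2*n+1+(2*k+1) = 2*(n+k)+2 by ring]; exact b_even hbdef (n+k)
  have key := tsum_even_add_odd (f := fun k => b (2*n+1+k))
    (by rw [he]; exact hae) (by rw [ho]; exact hae)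
  rw [rTail, ← key, he, ho, rTail, tsum_div_const]
  ring
end BSeq
/-- Theorem, (3) ⇒ (1), by contraposition: if the inverse
of the dimension function `h_a` associated to `a` is *not* doubling, then the
sequence `b` given by `b₁ = a₁`, `b_{2k} = b_{2k+1} = a_k/2` (0-based below:
`b 0 = a 0`, `b (2k+1) = b (2k+2) = a k / 2`) is a non-increasing summable
positive sequence, weak tail-equivalent to `a` (indeed `r_{2n}^{(b)} = rₙ^{(a)}`),
but not tail-equivalent to `a`: the ratios `rₙ^{(b)}/rₙ^{(a)}` are unbounded.
Consequently, if every sequence weak tail-equivalent to `a` is tail-equivalent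
to `a`, then `h_a⁻¹` is doubling. -/
theorem not_tailEquiv_of_inv_not_doubling (A : ℝ) (hA : 0 < A) (a : ℕ → ℝ)
    (apos : ∀ n, 0 < a n) (amono : ∀ n, a (n + 1) ≤ a n) (asum : Summable a)
    (hra : rTail a 0 ≤ A)
    (ha ha' : ℝ → ℝ) (haa : IsAssociatedR A ha a)
    (hinv : ∀ x ∈ Set.Ioc (0 : ℝ) A, ha' (ha x) = x)
    (hnd : ¬ ∃ τ : ℝ, 0 < τ ∧ ∀ y : ℝ, y ∈ ha '' Set.Ioc (0 : ℝ) A →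
      2 * y ∈ ha '' Set.Ioc (0 : ℝ) A → τ * ha' (2 * y) ≤ ha' y)
    (b : ℕ → ℝ)
    (hbdef : b = fun n => if n = 0 then a 0 else a ((n - 1) / 2) / 2) :
    (∀ n, 0 < b n) ∧ (∀ n, b (n + 1) ≤ b n) ∧ Summable b ∧
    (∀ n : ℕ, rTail b (2 * n + 1) = rTail a n) ∧
    WeakTailEquiv a b ∧
    (¬ ∃ c₂ : ℝ, ∀ n : ℕ, rTail b n / rTail a n ≤ c₂) ∧
    ¬ (∀ b' : ℕ → ℝ, (∀ n, 0 < b' n) → (∀ n, b' (n + 1) ≤ b' n) →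
        Summable b' → WeakTailEquiv a b' → TailEquiv b' a) := by
  have amono' : Antitone a := antitone_nat_of_succ_le amono
  have bpos : ∀ n, 0 < b n := by
    intro n
    rw [hbdef]
    simp only
    split
    · exact apos 0
    · exact div_pos (apos _) two_pos
  have bmono : ∀ n, b (n + 1) ≤ b n := by
    intro n
    rcases Nat.eq_zero_or_pos n with rfl | hn
    · rw [hbdef]
      simp only [Nat.add_one, Nat.succ_ne_zero, if_false, if_pos rfl]
      norm_num
      linarith [apos 0]
    · rw [hbdef]
      simp only
      rw [if_neg (by omega), if_neg (by omega)]
      have h := amono' (show (n-1)/2 ≤ (n+1-1)/2 by omega)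
      linarith
  have bsum : Summable b := summable_b hbdef asum
  have hrb : ∀ n : ℕ, rTail b (2 * n + 1) = rTail a n := rTail_b_eq hbdef asum
  have hab : ∀ n : ℕ, rTail a n ≤ rTail b n := fun n => by
    rw [← hrb n]
    exact rTail_anti' bpos bsum (by omega)
  have wte : WeakTailEquiv a b := by
    refine ⟨3, 1, by norm_num, by norm_num, fun n => ?_, fun n => ?_⟩
    · have h1 : rTail b (3*(n+1)-1) ≤ rTail b (2*n+1) :=
        rTail_anti' bpos bsum (by omega)
      have h2 : rTail b (3*(n+1)-1) / 3 ≤ rTail b (3*(n+1)-1) :=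
        div_le_self (rTail_pos' bpos bsum _).le (by norm_num)
      calc rTail b (3*(n+1)-1) / (3:ℕ) = rTail b (3*(n+1)-1) / 3 := by norm_num
      _ ≤ rTail b (2*n+1) := le_trans h2 h1
      _ = rTail a n := hrb n
    · have h1 : 1*(n+1)-1 = n := by omega
      rw [h1]
      calc rTail a n / (1:ℕ) = rTail a n := by norm_num
      _ ≤ rTail b n := hab n
  have hub : ¬ ∃ c₂ : ℝ, ∀ n : ℕ, rTail b n / rTail a n ≤ c₂ := by
    rintro ⟨c₂, hc⟩
    apply hnd
    have hK : ∀ n, rTail a n ≤ (max c₂ 1) * rTail a (2*n+1) := by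
      intro n
      have h1 := hc (2*n+1)
      rw [hrb n, div_le_iff₀ (rTail_pos' apos asum _)] at h1
      calc rTail a n ≤ c₂ * rTail a (2*n+1) := h1
      _ ≤ (max c₂ 1) * rTail a (2*n+1) :=
          mul_le_mul_of_nonneg_right (le_max_left _ _) (rTail_pos' apos asum _).le
    exact doubling_of_ratio_bounded A hA a apos asum hra ha ha' haa hinv
      (le_max_right _ _) hK
  refine ⟨bpos, bmono, bsum, hrb, wte, hub, fun H => ?_⟩
  obtain ⟨d₁, d₂, hd₁, hd⟩ := H b bpos bmono bsum wte
  exact hub ⟨d₂, fun n => (hd n).2⟩
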